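/- (Theorem 5) Let 0 < α < β, M ≥ 1, and r_i = ((β−α)/2)cos((2i−1)π/(2M)) + (β+α)/2 for i = 1, …, M. Let L be an N×N real symmetric positive semidefinite matrix whose kernel is spanned by the all-ones vector 1⃗ and whose nonzero eigenvalues λ₂ ≤ … ≤ λ_N all lie in [α, β]. Then the M-periodic gain sequence ε*(k+jM) = 1/r_{k+1} (k = 0, …, M−1, j ≥ 0) drives ∏_{k=0}^{T−1}(I − ε*(k)L) to (1/N)·1⃗1⃗ᵀ as T → ∞, and its per-period convergence rate satisfies ρ_M = max_{2 ≤ i ≤ N} |∏_{k=1}^{M}(1 − λᵢ/r_k)| ≤ γ*_M := 1/|g_M(0)| < 1, where g_M(0) = T_M(−(β+α)/(β−α)). -/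

import Mathlib

open Matrix Finset Filter Polynomial

/-- The product `∏_{k=0}^{T-1} (I - ε(k) L)`, built recursively as
`P 0 = I`, `P (T+1) = (I - ε(T) L) * P T`. -/
noncomputable def consProd {N : ℕ} (L : Matrix (Fin N) (Fin N) ℝ) (ε : ℕ → ℝ) :
    ℕ → Matrix (Fin N) (Fin N) ℝ
  | 0 => 1
  | T + 1 => (1 - ε T • L) * consProd L ε T

set_option linter.unusedSectionVars false
set_option linter.unnecessarySimpa false
set_option linter.unreachableTactic false
set_option linter.unusedTactic false
set_option maxHeartbeats 1000000

section Aux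
open Polynomial Finset

lemma ndeg2X : (2 * X : ℝ[X]).natDegree = 1 := by compute_degree!
lemma lc2X : (2 * X : ℝ[X]).leadingCoeff = 2 := by rw [leadingCoeff, ndeg2X]; simp

lemma twoXmul (p : ℝ[X]) (hp : p ≠ 0) : (2 * X * p).natDegree = p.natDegree + 1 ∧
    (2 * X * p).leadingCoeff = 2 * p.leadingCoeff := by
  constructor
  · rw [natDegree_mul (by intro h; simpa [h] using ndeg2X) hp, ndeg2X, add_comm]
  · rw [leadingCoeff_mul, lc2X]

lemma chebDegLC : ∀ n : ℕ, (Chebyshev.T ℝ ((n:ℤ)+1)).natDegree = n+1 ∧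
    (Chebyshev.T ℝ ((n:ℤ)+1)).leadingCoeff = 2^n := by
  have base2 : (Chebyshev.T ℝ 2).natDegree = 2 ∧ (Chebyshev.T ℝ 2).leadingCoeff = 2 := by
    have h : (Chebyshev.T ℝ 2).natDegree = 2 := by rw [Chebyshev.T_two]; compute_degree!
    refine ⟨h, ?_⟩
    rw [leadingCoeff, h, Chebyshev.T_two]
    simp [coeff_sub, Polynomial.coeff_one]
  have key : ∀ n : ℕ, ((Chebyshev.T ℝ ((n:ℤ)+1)).natDegree = n+1 ∧
      (Chebyshev.T ℝ ((n:ℤ)+1)).leadingCoeff = 2^n) ∧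
      ((Chebyshev.T ℝ ((n:ℤ)+2)).natDegree = n+2 ∧
      (Chebyshev.T ℝ ((n:ℤ)+2)).leadingCoeff = 2^(n+1)) := by
    intro n
    induction n with
    | zero =>
      refine ⟨⟨by simp [Chebyshev.T_one], by simp [Chebyshev.T_one]⟩, ?_, ?_⟩
      · simpa using base2.1
      · simpa using base2.2
    | succ k ih =>
      obtain ⟨⟨hd1, hl1⟩, hd2, hl2⟩ := ih
      have h3 : Chebyshev.T ℝ ((k:ℤ)+3) =
          2 * X * Chebyshev.T ℝ ((k:ℤ)+2) - Chebyshev.T ℝ ((k:ℤ)+1) := by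
        have := Chebyshev.T_add_two ℝ ((k:ℤ)+1)
        convert this using 2 <;> ring
      have hp : Chebyshev.T ℝ ((k:ℤ)+2) ≠ 0 := by
        intro h; rw [h] at hl2; simp [leadingCoeff] at hl2
        exact absurd hl2.symm (by positivity)
      obtain ⟨hmd, hml⟩ := twoXmul _ hp
      have hdm : (2 * X * Chebyshev.T ℝ ((k:ℤ)+2)).natDegree = k+3 := by rw [hmd, hd2]
      have hlt : (Chebyshev.T ℝ ((k:ℤ)+1)).degree < (2 * X * Chebyshev.T ℝ ((k:ℤ)+2)).degree := by
        apply degree_lt_degree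
        rw [hdm, hd1]; omega
      constructor
      · constructor
        · push_cast; exact hd2
        · push_cast; exact hl2
      have hc : ((k+1:ℕ):ℤ)+2 = (k:ℤ)+3 := by push_cast; ring
      constructor
      · rw [hc, h3,
          natDegree_sub_eq_left_of_natDegree_lt (by rw [hdm, hd1]; omega), hdm]
      · rw [hc, h3, leadingCoeff_sub_of_degree_lt hlt, hml, hl2]
        ring
  intro n; exact (key n).1

lemma chebFactor (M : ℕ) (hM : 1 ≤ M) (x : ℝ) :
    (Chebyshev.T ℝ (M:ℤ)).eval x =
      2^(M-1) * ∏ k ∈ range M, (x - Real.cos ((2*(k:ℝ)+1) * Real.pi / (2*M))) := by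
  have hM0 : (M:ℝ) ≠ 0 := by positivity
  set c : ℕ → ℝ := fun k => Real.cos ((2*(k:ℝ)+1) * Real.pi / (2*M)) with hc
  set Q : ℝ[X] := C ((2:ℝ)^(M-1)) * ∏ k ∈ range M, (X - C (c k)) with hQ
  obtain ⟨m, hm1⟩ : ∃ m, m + 1 = M := ⟨M - 1, by omega⟩
  have hdlc := chebDegLC m
  rw [show ((m:ℤ)+1) = (M:ℤ) by push_cast [← hm1]; ring, hm1] at hdlc
  have hTne : Chebyshev.T ℝ (M:ℤ) ≠ 0 := by
    intro h; rw [h] at hdlc; simp [leadingCoeff] at hdlc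
    exact absurd hdlc.2.symm (by positivity)
  have hproddeg : (∏ k ∈ range M, (X - C (c k)) : ℝ[X]).natDegree = M := by
    rw [natDegree_prod _ _ (fun k _ => X_sub_C_ne_zero (c k))]
    simp
  have hprodmonic : (∏ k ∈ range M, (X - C (c k)) : ℝ[X]).Monic :=
    monic_prod_of_monic _ _ (fun k _ => monic_X_sub_C (c k))
  have hQdeg : Q.natDegree = M := by
    rw [hQ, natDegree_C_mul (by positivity : (2:ℝ)^(M-1) ≠ 0), hproddeg]
  have hQlc : Q.leadingCoeff = 2^(M-1) := by
    rw [hQ, leadingCoeff_mul, hprodmonic.leadingCoeff, leadingCoeff_C, mul_one]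
  have hQne : Q ≠ 0 := by
    intro h; rw [h] at hQlc; simp [leadingCoeff] at hQlc
    exact absurd hQlc.symm (by positivity)
  -- angles in [0, π], distinct
  have hθmem : ∀ k ∈ range M, (2*(k:ℝ)+1) * Real.pi / (2*M) ∈ Set.Icc 0 Real.pi := by
    intro k hk
    rw [mem_range] at hk
    constructor
    · positivity
    · rw [div_le_iff₀ (by positivity)]
      have : (2*(k:ℝ)+1) ≤ 2*M := by
        have : (k:ℝ) + 1 ≤ M := by exact_mod_cast Nat.succ_le_of_lt hk
        linarith
      nlinarith [Real.pi_pos]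
  have hinj : Set.InjOn c (range M) := by
    intro a ha b hb hab
    have h1 := Real.injOn_cos (hθmem a ha) (hθmem b hb) hab
    field_simp at h1
    have h2 : (a:ℝ) = b := by linarith
    exact_mod_cast h2
  -- roots of T
  have hroot : ∀ k ∈ range M, (Chebyshev.T ℝ (M:ℤ)).eval (c k) = 0 := by
    intro k hk
    rw [hc]
    simp only []
    rw [Chebyshev.T_real_cos]
    have : (M:ℝ) * ((2*(k:ℝ)+1) * Real.pi / (2*M)) = (k:ℝ)*Real.pi + Real.pi/2 := by
      field_simp
    push_cast
    rw [this, Real.cos_add_pi_div_two]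
    simp [Real.sin_nat_mul_pi]
  -- T = Q
  have hTQ : Chebyshev.T ℝ (M:ℤ) = Q := by
    by_contra hne
    have hsub : Chebyshev.T ℝ (M:ℤ) - Q ≠ 0 := sub_ne_zero.mpr hne
    have hdegsub : (Chebyshev.T ℝ (M:ℤ) - Q).degree < (Chebyshev.T ℝ (M:ℤ)).degree :=
      degree_sub_lt (by rw [degree_eq_natDegree hTne, degree_eq_natDegree hQne, hdlc.1, hQdeg])
        hTne (by rw [hdlc.2, hQlc, ← hm1]; simp)
    have hnd : (Chebyshev.T ℝ (M:ℤ) - Q).natDegree < M := by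
      have := natDegree_lt_natDegree hsub hdegsub
      omega
    apply hsub
    apply eq_zero_of_natDegree_lt_card_of_eval_eq_zero' _ ((range M).image c)
    · intro y hy
      rw [Finset.mem_image] at hy
      obtain ⟨k, hk, rfl⟩ := hy
      rw [eval_sub, hroot k hk, hQ]
      simp only [eval_mul, eval_C, eval_prod, eval_sub, eval_X]
      rw [Finset.prod_eq_zero hk (by simp)]
      ring
    · rwa [Finset.card_image_of_injOn hinj, card_range]
  rw [hTQ, hQ]
  simp [eval_prod]
  rfl

lemma chebAbsLe (n : ℤ) (y : ℝ) (hy : y ∈ Set.Icc (-1:ℝ) 1) :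
    |(Chebyshev.T ℝ n).eval y| ≤ 1 := by
  obtain ⟨hy1, hy2⟩ := hy
  have : y = Real.cos (Real.arccos y) := (Real.cos_arccos hy1 hy2).symm
  rw [this, Chebyshev.T_real_cos]
  exact Real.abs_cos_le_one _

lemma chebGrow (x : ℝ) (hx : x ≤ -1) (a : ℕ → ℝ)
    (ha : ∀ n : ℕ, a n = (-1:ℝ)^n * (Chebyshev.T ℝ (n:ℤ)).eval x) :
    ∀ n : ℕ, (1 ≤ a n ∧ a n ≤ a (n+1)) ∧ (1 ≤ n → -x ≤ a n) := by
  have ha2 : ∀ k : ℕ, a (k+2) = (-2*x) * a (k+1) - a k := by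
    intro k
    have hrec : Chebyshev.T ℝ ((k:ℤ)+2) = 2 * X * Chebyshev.T ℝ ((k:ℤ)+1) - Chebyshev.T ℝ (k:ℤ) := by
      simpa using Chebyshev.T_add_two ℝ (k:ℤ)
    rw [ha, ha, ha]
    push_cast
    rw [hrec]
    simp
    ring
  have ha1 : a 1 = -x := by rw [ha]; simp [Chebyshev.T_one]
  intro n
  induction n with
  | zero =>
    refine ⟨⟨by rw [ha]; simp [Chebyshev.T_zero], ?_⟩, by omega⟩
    rw [ha1, ha]; simp [Chebyshev.T_zero]; linarith
  | succ k ih =>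
    obtain ⟨⟨h1, h2⟩, h3⟩ := ih
    have hk1 : (1:ℝ) ≤ a (k+1) := le_trans h1 h2
    have hstep : a (k+1) ≤ a (k+2) := by
      rw [ha2]
      nlinarith [mul_le_mul_of_nonneg_right (by linarith : (2:ℝ) ≤ -2*x)
        (by linarith : (0:ℝ) ≤ a (k+1))]
    refine ⟨⟨hk1, hstep⟩, fun _ => ?_⟩
    rcases Nat.eq_zero_or_pos k with rfl | hk
    · rw [ha1]
    · exact le_trans (h3 hk) h2

section Main
variable (α β : ℝ) (hα : 0 < α) (hαβ : α < β) (M : ℕ) (hM : 1 ≤ M) (r : ℕ → ℝ)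
  (hr : ∀ i, r i = (β - α) / 2 * Real.cos ((2 * (i : ℝ) - 1) * Real.pi / (2 * M)) + (β + α) / 2)

include hα hαβ hM hr

lemma rpos : ∀ k, 0 < r (k+1) ∧ r (k+1) ≤ β := by
  intro k
  have h1 : -1 ≤ Real.cos ((2 * ((k+1:ℕ) : ℝ) - 1) * Real.pi / (2 * M)) := Real.neg_one_le_cos _
  have h2 : Real.cos ((2 * ((k+1:ℕ) : ℝ) - 1) * Real.pi / (2 * M)) ≤ 1 := Real.cos_le_one _
  constructor
  · rw [hr]; nlinarith
  · rw [hr]; nlinarith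

lemma keyIdentity : ∀ lam : ℝ,
    (Chebyshev.T ℝ (M:ℤ)).eval ((2*lam - (β+α))/(β-α)) =
      2^(M-1) * (2/(β-α))^M * ∏ k ∈ range M, (lam - r (k+1)) := by
  intro lam
  rw [chebFactor M hM]
  rw [mul_assoc]
  congr 1
  have : ∀ k ∈ range M, ((2*lam - (β+α))/(β-α) - Real.cos ((2*(k:ℝ)+1) * Real.pi / (2*M)))
      = (2/(β-α)) * (lam - r (k+1)) := by
    intro k _
    rw [hr (k+1)]
    have hba : β - α ≠ 0 := by linarith
    push_cast
    field_simp
    ring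
  rw [Finset.prod_congr rfl this, Finset.prod_mul_distrib, Finset.prod_const, Finset.card_range]
end Main


section Main2
variable (α β : ℝ) (hα : 0 < α) (hαβ : α < β) (M : ℕ) (hM : 1 ≤ M) (r : ℕ → ℝ)
  (hr : ∀ i, r i = (β - α) / 2 * Real.cos ((2 * (i : ℝ) - 1) * Real.pi / (2 * M)) + (β + α) / 2)

include hα hαβ hM in
lemma chebX0gt : 1 < |(Chebyshev.T ℝ (M:ℤ)).eval (-(β + α) / (β - α))| := by
  set x₀ : ℝ := -(β + α) / (β - α) with hx₀
  have hba : (0:ℝ) < β - α := by linarith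
  have hgt : 1 < -x₀ := by
    rw [hx₀, ← neg_div, neg_neg, lt_div_iff₀ hba]; linarith
  have hx0le : x₀ ≤ -1 := by linarith
  obtain ⟨⟨_, _⟩, h3⟩ := chebGrow x₀ hx0le _ (fun n => rfl) M
  have haM := h3 hM
  calc 1 < -x₀ := hgt
    _ ≤ (-1:ℝ)^M * (Chebyshev.T ℝ (M:ℤ)).eval x₀ := haM
    _ ≤ |(-1:ℝ)^M * (Chebyshev.T ℝ (M:ℤ)).eval x₀| := le_abs_self _
    _ = |(Chebyshev.T ℝ (M:ℤ)).eval x₀| := by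
        rw [abs_mul, abs_pow, abs_neg, abs_one, one_pow, one_mul]

include hα hαβ hM hr in
lemma chebRatio (lam : ℝ) (hlam : lam ∈ Set.Icc α β) :
    |∏ k ∈ Finset.Icc 1 M, (1 - lam / r k)| ≤
      1 / |(Chebyshev.T ℝ (M:ℤ)).eval (-(β + α) / (β - α))| := by
  have hba : (0:ℝ) < β - α := by linarith
  set K : ℝ := 2^(M-1) * (2/(β-α))^M with hK
  have hKpos : 0 < K := by positivity
  have hx0eq : (-(β + α) / (β - α)) = (2*(0:ℝ) - (β+α))/(β-α) := by ring_nf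
  have h0 : |(Chebyshev.T ℝ (M:ℤ)).eval (-(β + α) / (β - α))| = K * ∏ k ∈ range M, r (k+1) := by
    rw [hx0eq, keyIdentity α β hα hαβ M hM r hr 0, abs_mul, Finset.abs_prod]
    rw [abs_of_pos hKpos]
    congr 1
    apply Finset.prod_congr rfl
    intro k _
    rw [zero_sub, abs_neg, abs_of_pos (rpos α β hα hαβ M hM r hr k).1]
  have hl : |(Chebyshev.T ℝ (M:ℤ)).eval ((2*lam - (β+α))/(β-α))| =
      K * ∏ k ∈ range M, |lam - r (k+1)| := by
    rw [keyIdentity α β hα hαβ M hM r hr lam, abs_mul, Finset.abs_prod, abs_of_pos hKpos]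
  have htmem : (2*lam - (β+α))/(β-α) ∈ Set.Icc (-1:ℝ) 1 := by
    obtain ⟨h1, h2⟩ := hlam
    constructor
    · rw [le_div_iff₀ hba]; linarith
    · rw [div_le_one hba]; linarith
  have hTle := chebAbsLe (M:ℤ) _ htmem
  have hrpos : (0:ℝ) < ∏ k ∈ range M, r (k+1) :=
    Finset.prod_pos (fun k _ => (rpos α β hα hαβ M hM r hr k).1)
  have hLHS : |∏ k ∈ Finset.Icc 1 M, (1 - lam / r k)| =
      (∏ k ∈ range M, |lam - r (k+1)|) / ∏ k ∈ range M, r (k+1) := by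
    rw [← Finset.Ico_add_one_right_eq_Icc, Finset.prod_Ico_eq_prod_range]
    rw [Finset.abs_prod, ← Finset.prod_div_distrib]
    apply Finset.prod_congr rfl
    intro k _
    have hrk := (rpos α β hα hαβ M hM r hr k).1
    rw [show 1 + k = k + 1 by ring]
    have h1 : 1 - lam / r (k+1) = (r (k+1) - lam) / r (k+1) := by field_simp
    rw [h1, abs_div, abs_of_pos hrk, abs_sub_comm]
  rw [hLHS, h0]
  have hprodeq : (∏ k ∈ range M, |lam - r (k+1)|) =
      |(Chebyshev.T ℝ (M:ℤ)).eval ((2*lam - (β+α))/(β-α))| / K := by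
    rw [hl]; field_simp
  rw [hprodeq, div_div]
  gcongr
end Main2


section Mat
variable {N : ℕ} (L : Matrix (Fin N) (Fin N) ℝ) (lam : Fin N → ℝ) (v : Fin N → Fin N → ℝ)
  (heig : ∀ i, L.mulVec (v i) = lam i • v i)
  (horth : ∀ i j, v i ⬝ᵥ v j = if i = j then 1 else 0)

-- completeness of orthonormal basis
include horth in
lemma sumE : ∑ i, vecMulVec (v i) (v i) = (1 : Matrix (Fin N) (Fin N) ℝ) := by
  have hVVT : (Matrix.of v) * (Matrix.of v)ᵀ = 1 := by
    ext i j
    simp [Matrix.mul_apply, Matrix.one_apply, ← horth i j, dotProduct]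
  have hVTV : (Matrix.of v)ᵀ * (Matrix.of v) = 1 := mul_eq_one_comm.mp hVVT
  ext a b
  have := congrFun (congrFun hVTV a) b
  simp [Matrix.mul_apply, vecMulVec_apply, Matrix.one_apply, Matrix.sum_apply] at this ⊢
  rw [← this]

include heig in
lemma LmulE (i : Fin N) : L * vecMulVec (v i) (v i) = lam i • vecMulVec (v i) (v i) := by
  ext a b
  simp only [Matrix.mul_apply, vecMulVec_apply, Matrix.smul_apply, smul_eq_mul]
  have : ∑ c, L a c * (v i c * v i b) = (∑ c, L a c * v i c) * v i b := by
    rw [Finset.sum_mul]; congr 1; ext c; ring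
  rw [this, show (∑ c, L a c * v i c) = L.mulVec (v i) a from rfl, heig i]
  simp [mul_assoc]

include heig horth in
lemma consProdEq (ε : ℕ → ℝ) (T : ℕ) :
    consProd L ε T = ∑ i, (∏ k ∈ range T, (1 - ε k * lam i)) • vecMulVec (v i) (v i) := by
  induction T with
  | zero => simp [consProd, sumE v horth]
  | succ T ih =>
    rw [consProd, ih, sub_mul, one_mul, Finset.mul_sum]
    rw [← Finset.sum_sub_distrib]
    apply Finset.sum_congr rfl
    intro i _
    rw [Finset.prod_range_succ]
    rw [mul_smul_comm, smul_mul_assoc, LmulE L lam v heig i]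
    simp only [smul_smul, ← sub_smul]
    congr 1
    ring
end Mat

lemma prodPeriod (M : ℕ) (A : ℕ → ℝ) :
    ∀ q, ∏ k ∈ range (q * M), A (k % M) = (∏ k ∈ range M, A k)^q := by
  intro q
  induction q with
  | zero => simp
  | succ q ih =>
    rw [Nat.succ_mul, Finset.prod_range_add, ih, pow_succ]
    congr 1
    apply Finset.prod_congr rfl
    intro j hj
    rw [mem_range] at hj
    rw [add_comm, Nat.add_mul_mod_self_right, Nat.mod_eq_of_lt hj]

lemma periodicProdBound (M : ℕ) (hM : 1 ≤ M) (A : ℕ → ℝ) (hA : ∀ k, 0 ≤ A k) (T : ℕ) :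
    ∏ k ∈ range T, A (k % M) ≤
      (∏ k ∈ range M, A k)^(T/M) * ∏ k ∈ range M, (1 + A k) := by
  have hT : T = (T/M) * M + T % M := by
    rw [Nat.mul_comm]; exact (Nat.div_add_mod T M).symm
  conv_lhs => rw [hT, Finset.prod_range_add, prodPeriod]
  apply mul_le_mul_of_nonneg_left ?_ (pow_nonneg (Finset.prod_nonneg fun k _ => hA k) _)
  have hmod : ∀ x ∈ range (T % M), A ((T / M * M + x) % M) = A x := by
    intro x hx
    rw [mem_range] at hx
    have hxM : x < M := lt_of_lt_of_le hx (Nat.mod_lt T (show 0 < M by omega)).le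
    rw [add_comm, Nat.add_mul_mod_self_right, Nat.mod_eq_of_lt hxM]
  rw [Finset.prod_congr rfl hmod]
  calc ∏ x ∈ range (T % M), A x ≤ ∏ x ∈ range (T % M), (1 + A x) :=
        Finset.prod_le_prod (fun x _ => hA _) (fun x _ => by linarith [hA x])
    _ ≤ ∏ x ∈ range M, (1 + A x) := by
        have hsplit : ∏ x ∈ range M, (1+A x) =
            (∏ x ∈ range (T%M), (1+A x)) * ∏ x ∈ range (M - T%M), (1+A (T%M + x)) := by
          rw [← Finset.prod_range_add]
          rw [Nat.add_sub_cancel' (Nat.mod_lt T (show 0 < M by omega)).le]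
        rw [hsplit]
        apply le_mul_of_one_le_right
          (Finset.prod_nonneg fun x _ => by linarith [hA x])
        calc (1:ℝ) = ∏ x ∈ range (M - T%M), (1:ℝ) := by simp
          _ ≤ ∏ x ∈ range (M - T%M), (1 + A (T%M + x)) :=
            Finset.prod_le_prod (fun x _ => zero_le_one) (fun x _ => by linarith [hA (T%M + x)])

lemma periodicProdTendsto (M : ℕ) (hM : 1 ≤ M) (A : ℕ → ℝ) (hA : ∀ k, 0 ≤ A k)
    (hρ : ∏ k ∈ range M, A k < 1) :
    Tendsto (fun T => ∏ k ∈ range T, A (k % M)) atTop (nhds 0) := by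
  set ρ := ∏ k ∈ range M, A k with hρdef
  set B := ∏ k ∈ range M, (1 + A k) with hB
  have hρ0 : 0 ≤ ρ := Finset.prod_nonneg (fun k _ => hA k)
  have hdiv : Tendsto (fun T : ℕ => T / M) atTop atTop := by
    apply tendsto_atTop_atTop.mpr
    intro b
    exact ⟨b * M, fun a ha => (Nat.le_div_iff_mul_le (by omega)).mpr ha⟩
  have hpow : Tendsto (fun T : ℕ => ρ^(T/M) * B) atTop (nhds 0) := by
    have := (tendsto_pow_atTop_nhds_zero_of_lt_one hρ0 hρ).comp hdiv
    simpa using this.mul_const B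
  apply squeeze_zero (fun T => Finset.prod_nonneg (fun k _ => hA _))
    (fun T => periodicProdBound M hM A hA T) hpow

end Aux

theorem stmt_17 (α β : ℝ) (hα : 0 < α) (hαβ : α < β) (M : ℕ) (hM : 1 ≤ M)
    -- the Chebyshev interpolation points r_1, …, r_M on [α, β]
    (r : ℕ → ℝ)
    (hr : ∀ i, r i = (β - α) / 2 * Real.cos ((2 * (i : ℝ) - 1) * Real.pi / (2 * M)) +
      (β + α) / 2)
    (N : ℕ) (hN : 2 ≤ N)
    (L : Matrix (Fin N) (Fin N) ℝ) (hsymm : L.IsSymm) (hpsd : L.PosSemidef)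
    (lam : Fin N → ℝ) (v : Fin N → Fin N → ℝ)
    (hlam_mono : Monotone lam)
    (hlam0 : ∀ i : Fin N, (i : ℕ) = 0 → lam i = 0)
    (hlam_pos : ∀ i : Fin N, (i : ℕ) ≠ 0 → 0 < lam i)
    (heig : ∀ i, L.mulVec (v i) = lam i • v i)
    (horth : ∀ i j, v i ⬝ᵥ v j = if i = j then 1 else 0)
    (hv0 : ∀ i : Fin N, (i : ℕ) = 0 → v i = fun _ => (Real.sqrt N)⁻¹)
    (hne : (Finset.univ.filter (fun i : Fin N => (i : ℕ) ≠ 0)).Nonempty)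
    -- all nonzero eigenvalues lie in [α, β]
    (hspec : ∀ i : Fin N, (i : ℕ) ≠ 0 → lam i ∈ Set.Icc α β)
    -- the M-periodic gain sequence ε*(k + jM) = 1/r_{k+1}
    (ε : ℕ → ℝ) (hε : ∀ j k, k < M → ε (k + j * M) = (r (k + 1))⁻¹) :
    Tendsto (consProd L ε) atTop
      (nhds ((N : ℝ)⁻¹ • vecMulVec (fun _ => 1) (fun _ => 1))) ∧
    (Finset.univ.filter (fun i : Fin N => (i : ℕ) ≠ 0)).sup' hne
        (fun i => |∏ k ∈ Finset.Icc 1 M, (1 - lam i / r k)|) ≤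
      1 / |(Polynomial.Chebyshev.T ℝ (M : ℤ)).eval (-(β + α) / (β - α))| ∧
    1 / |(Polynomial.Chebyshev.T ℝ (M : ℤ)).eval (-(β + α) / (β - α))| < 1 := by
  have hTgt : 1 < |(Polynomial.Chebyshev.T ℝ (M : ℤ)).eval (-(β + α) / (β - α))| :=
    chebX0gt α β hα hαβ M hM
  have hTpos : (0:ℝ) < |(Polynomial.Chebyshev.T ℝ (M : ℤ)).eval (-(β + α) / (β - α))| := by
    linarith
  have hγlt : 1 / |(Polynomial.Chebyshev.T ℝ (M : ℤ)).eval (-(β + α) / (β - α))| < 1 :=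
    (div_lt_one hTpos).mpr hTgt
  refine ⟨?_, ?_, hγlt⟩
  · -- convergence
    have hcp : consProd L ε = fun T =>
        ∑ i, (∏ k ∈ Finset.range T, (1 - ε k * lam i)) • vecMulVec (v i) (v i) :=
      funext (consProdEq L lam v heig horth ε)
    rw [hcp]
    set g : Fin N → Matrix (Fin N) (Fin N) ℝ :=
      fun i => if (i : ℕ) = 0 then vecMulVec (v i) (v i) else 0 with hg
    have i₀ : Fin N := ⟨0, by omega⟩
    have hsum : (∑ i, g i) = (N : ℝ)⁻¹ • vecMulVec (fun _ => (1:ℝ)) (fun _ => 1) := by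
      rw [Finset.sum_eq_single (⟨0, by omega⟩ : Fin N)]
      · simp only [hg]
        rw [if_pos trivial, hv0 ⟨0, by omega⟩ rfl]
        ext a b
        simp only [vecMulVec_apply, Matrix.smul_apply, smul_eq_mul]
        have h : (Real.sqrt N)⁻¹ * (Real.sqrt N)⁻¹ = ((N:ℝ))⁻¹ := by
          rw [← mul_inv, Real.mul_self_sqrt (by positivity : (0:ℝ) ≤ (N:ℝ))]
        rw [h]
        ring
      · intro j _ hj
        simp only [hg]
        rw [if_neg]
        intro hj0
        exact hj (Fin.ext hj0)
      · intro h
        exact absurd (Finset.mem_univ _) h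
    rw [← hsum]
    apply tendsto_finset_sum
    intro i _
    by_cases hi : (i : ℕ) = 0
    · have hlami : lam i = 0 := hlam0 i hi
      have : (fun T => (∏ k ∈ Finset.range T, (1 - ε k * lam i)) • vecMulVec (v i) (v i))
          = fun _ => vecMulVec (v i) (v i) := by
        funext T
        rw [hlami]
        simp
      rw [this, hg]
      simp only [if_pos hi]
      exact tendsto_const_nhds
    · -- scalar product tends to zero
      set A : ℕ → ℝ := fun k => |1 - lam i / r (k+1)| with hA
      have hAnn : ∀ k, 0 ≤ A k := fun k => abs_nonneg _
      have hρlt : ∏ k ∈ Finset.range M, A k < 1 := by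
        have h1 : ∏ k ∈ Finset.range M, A k = |∏ k ∈ Finset.Icc 1 M, (1 - lam i / r k)| := by
          rw [Finset.abs_prod, ← Finset.Ico_add_one_right_eq_Icc, Finset.prod_Ico_eq_prod_range]
          apply Finset.prod_congr rfl
          intro k _
          rw [hA]
          simp only []
          rw [add_comm 1 k]
        rw [h1]
        exact lt_of_le_of_lt (chebRatio α β hα hαβ M hM r hr (lam i) (hspec i hi)) hγlt
      have hεk : ∀ k, ε k = (r (k % M + 1))⁻¹ := by
        intro k
        have := hε (k / M) (k % M) (Nat.mod_lt k (show 0 < M by omega))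
        rwa [Nat.mod_add_div' k M] at this
      have habs : ∀ T, |∏ k ∈ Finset.range T, (1 - ε k * lam i)| =
          ∏ k ∈ Finset.range T, A (k % M) := by
        intro T
        rw [Finset.abs_prod]
        apply Finset.prod_congr rfl
        intro k _
        rw [hεk k, hA]
        simp only []
        rw [div_eq_mul_inv, mul_comm]
      have hscalar : Tendsto (fun T => ∏ k ∈ Finset.range T, (1 - ε k * lam i))
          atTop (nhds 0) := by
        apply squeeze_zero_norm (fun T => le_of_eq ?_)
          (periodicProdTendsto M hM A hAnn hρlt)
        rw [Real.norm_eq_abs, habs]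
      have := hscalar.smul_const (vecMulVec (v i) (v i))
      rw [zero_smul] at this
      rw [hg]
      simpa only [if_neg hi] using this
  · -- sup' bound
    apply Finset.sup'_le
    intro i hi
    rw [Finset.mem_filter] at hi
    exact chebRatio α β hα hαβ M hM r hr (lam i) (hspec i hi.2)
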